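/- Let G be a labelled graph and let u ≈ u′ be vertices of G. If w is a finite word having a presentation in G that ends at u, then there exists a word w′ with |w′| = |w| having a presentation ending at u′, and a chain in the language of G from w to w′. -/

import Mathlib

/-! Common definitions: labelled graphs, walks, follower sets, the linking
relation, subshifts over `ℤ → A`, chains, and attractors. -/

structure LGraph (A : Type) where
  V : Type
  E : Type
  [finV : Finite V]
  [finE : Finite E]
  s : E → V
  t : E → V
  lab : E → A

attribute [instance] LGraph.finV LGraph.finE

namespace LGraph

variable {A : Type}

/-- `Walk G u v es` : the list of edges `es` forms a walk from `u` to `v`. -/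
inductive Walk (G : LGraph A) : G.V → G.V → List G.E → Prop
  | nil (v : G.V) : Walk G v v []
  | cons {w : G.V} {es : List G.E} (e : G.E) (h : Walk G (G.t e) w es) :
      Walk G (G.s e) w (e :: es)

/-- There is an edge from `u` to `v`. -/
def EdgeRel (G : LGraph A) (u v : G.V) : Prop := ∃ e : G.E, G.s e = u ∧ G.t e = v

/-- `v` is reachable from `u` by a directed walk. -/
def Reach (G : LGraph A) : G.V → G.V → Prop := Relation.ReflTransGen G.EdgeRel

/-- `u` and `v` lie in the same strongly connected component. -/
def SameComp (G : LGraph A) (u v : G.V) : Prop := G.Reach u v ∧ G.Reach v u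

/-- The number of strongly connected components of `G`. -/
noncomputable def numComponents (G : LGraph A) : ℕ :=
  Nat.card {K : Set G.V // ∃ v : G.V, K = {u : G.V | G.SameComp v u}}

/-- The restricted follower set of `v` : words labelling walks starting at `v`
that stay inside the strongly connected component of `v`. -/
def FollowR (G : LGraph A) (v : G.V) : Set (List A) :=
  {w | ∃ (u : G.V) (es : List G.E), G.Walk v u es ∧ es.map G.lab = w ∧
        ∀ e ∈ es, G.SameComp v (G.s e) ∧ G.SameComp v (G.t e)}

/-- Two vertices are linked iff their restricted follower sets have infinite
intersection. -/
def Linked (G : LGraph A) (u v : G.V) : Prop := (G.FollowR u ∩ G.FollowR v).Infinite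

/-- `≈` : the reflexive-transitive closure of the linked relation. -/
def Approx (G : LGraph A) : G.V → G.V → Prop := Relation.ReflTransGen G.Linked

/-- One step in the linking graph `G/≈` (lifted to `G`): either an edge of `G`
or a jump between linked vertices. -/
def GenStep (G : LGraph A) (u v : G.V) : Prop := G.EdgeRel u v ∨ G.Linked u v

/-- Reachability in the linking graph `G/≈`, expressed on vertices of `G`. -/
def GenReach (G : LGraph A) : G.V → G.V → Prop := Relation.ReflTransGen G.GenStep

/-- The language of `G` : words labelling finite walks in `G`. -/
def Lang (G : LGraph A) : Set (List A) :=
  {w | ∃ (u v : G.V) (es : List G.E), G.Walk u v es ∧ es.map G.lab = w}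

/-- `w` has a presentation in the subgraph of `G` induced by the vertex set `S`. -/
def PresIn (G : LGraph A) (S : Set G.V) (w : List A) : Prop :=
  ∃ (u v : G.V) (es : List G.E), G.Walk u v es ∧ es.map G.lab = w ∧
    u ∈ S ∧ v ∈ S ∧ ∀ e ∈ es, G.s e ∈ S ∧ G.t e ∈ S

/-- A presentation of the first `n` letters of `w`, with explicit vertex
sequence `v` and edge sequence `e`. -/
def PresFun (G : LGraph A) (n : ℕ) (w : ℕ → A) (v : ℕ → G.V) (e : ℕ → G.E) : Prop :=
  ∀ i < n, G.s (e i) = v i ∧ G.t (e i) = v (i + 1) ∧ G.lab (e i) = w i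

/-- `S` is a union of `≈`-equivalence classes, i.e. `S = π⁻¹(π(S))` for the
projection `π : G → G/≈`. -/
def SaturatedSet (G : LGraph A) (S : Set G.V) : Prop :=
  ∀ u v : G.V, G.Approx u v → (u ∈ S ↔ v ∈ S)

/-- No edge leaves `S` : together with saturation this says that the image of
`S` in `G/≈` is a terminal subgraph. -/
def ForwardClosed (G : LGraph A) (S : Set G.V) : Prop :=
  ∀ e : G.E, G.s e ∈ S → G.t e ∈ S

/-- Every vertex has an ingoing and an outgoing edge. -/
def Essential (G : LGraph A) : Prop :=
  ∀ v : G.V, (∃ e : G.E, G.t e = v) ∧ (∃ e : G.E, G.s e = v)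

/-- A biinfinite presentation of `x` (vertex sequence `v`, edge sequence `e`)
staying in the vertex set `S`. -/
def BiPresIn (G : LGraph A) (S : Set G.V) (x : ℤ → A) (v : ℤ → G.V) (e : ℤ → G.E) : Prop :=
  ∀ i : ℤ, G.s (e i) = v i ∧ G.t (e i) = v (i + 1) ∧ G.lab (e i) = x i ∧ v i ∈ S

/-- The subshift of biinfinite label sequences of biinfinite walks of `G`
staying in `S`. -/
def SigmaIn (G : LGraph A) (S : Set G.V) : Set (ℤ → A) :=
  {x | ∃ v e, G.BiPresIn S x v e}

/-- The sofic subshift `Σ(G)`. -/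
def Sigma' (G : LGraph A) : Set (ℤ → A) := G.SigmaIn Set.univ

/-- The linking graph `G/≈` is strongly connected. -/
def StronglyConnectedQuot (G : LGraph A) : Prop := ∀ u v : G.V, G.GenReach u v

/-- The linking graph `G/≈` is periodic : its vertices can be partitioned into
`n > 1` classes (indexed by `ZMod n`, each a union of `≈`-classes) so that every
edge advances the class index by one. -/
def PeriodicQuot (G : LGraph A) : Prop :=
  ∃ n : ℕ, 1 < n ∧ ∃ c : G.V → ZMod n,
    (∀ u v : G.V, G.Approx u v → c u = c v) ∧ ∀ e : G.E, c (G.t e) = c (G.s e) + 1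

/-- The label product `G * H`. -/
def labelProduct (G H : LGraph A) : LGraph A where
  V := G.V × H.V
  E := {p : G.E × H.E // G.lab p.1 = H.lab p.2}
  s := fun p => (G.s p.1.1, H.s p.1.2)
  t := fun p => (G.t p.1.1, H.t p.1.2)
  lab := fun p => G.lab p.1.1

end LGraph

section Subshift

variable {A : Type}

/-- The shift map `σ`. -/
def shift (x : ℤ → A) : ℤ → A := fun i => x (i + 1)

open Classical in
/-- The metric `ρ(x,y) = 2^{-n}` where `n` is minimal with `x_n ≠ y_n` or
`x_{-n} ≠ y_{-n}` (and `ρ(x,x) = 0`). -/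
noncomputable def rho (x y : ℤ → A) : ℝ :=
  if x = y then 0
  else (2 : ℝ) ^ (-((sInf {n : ℕ | ∃ i : ℤ, i.natAbs = n ∧ x i ≠ y i} : ℕ) : ℤ))

/-- Closedness with respect to the metric `rho`. -/
def RhoClosed (Sig : Set (ℤ → A)) : Prop :=
  ∀ x : ℤ → A, (∀ ε : ℝ, 0 < ε → ∃ y ∈ Sig, rho x y < ε) → x ∈ Sig

/-- A subshift : a closed, strongly shift-invariant subset of `A^ℤ`. -/
def IsSubshift (Sig : Set (ℤ → A)) : Prop :=
  RhoClosed Sig ∧ shift '' Sig = Sig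

/-- The language of the subshift `Sig` : all finite factors of its points. -/
def lang (Sig : Set (ℤ → A)) : Set (List A) :=
  {w | ∃ x ∈ Sig, ∃ k : ℤ, ∀ (i : ℕ) (h : i < w.length), w.get ⟨i, h⟩ = x (k + i)}

/-- The central factor `x_{[-l,l]}` of a biinfinite word. -/
def central (x : ℤ → A) (l : ℕ) : List A :=
  (List.range (2 * l + 1)).map fun i => x ((i : ℤ) - (l : ℤ))

/-- `ChainWord L u v n w` : `w` is a chain of length `n` from `u` to `v` in the
language `L` : `|w| = n + |u|`, `w` has prefix `u` and suffix `v`, and every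
factor of `w` of length at most `|u|` belongs to `L`. -/
def ChainWord (L : Set (List A)) (u v : List A) (n : ℕ) (w : List A) : Prop :=
  u.length = v.length ∧ w.length = n + u.length ∧
  w.take u.length = u ∧ w.drop n = v ∧
  ∀ z : List A, z <:+: w → z.length ≤ u.length → z ∈ L

/-- An `ε`-chain of length `n > 0` from `x` to `y` inside `Sig`. -/
def EpsChain (Sig : Set (ℤ → A)) (ε : ℝ) (n : ℕ) (x y : ℤ → A) : Prop :=
  0 < n ∧ ∃ z : ℕ → ℤ → A, z 0 = x ∧ z n = y ∧ (∀ i ≤ n, z i ∈ Sig) ∧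
    ∀ i < n, rho (shift (z i)) (z (i + 1)) < ε

/-- The chain relation of `(Sig, σ)`. -/
def ChainRel (Sig : Set (ℤ → A)) (x y : ℤ → A) : Prop :=
  ∀ ε : ℝ, 0 < ε → ∃ n : ℕ, EpsChain Sig ε n x y

/-- Chain-transitivity. -/
def ChainTransitive (Sig : Set (ℤ → A)) : Prop :=
  ∀ x ∈ Sig, ∀ y ∈ Sig, ChainRel Sig x y

/-- Chain-mixing. -/
def ChainMixing (Sig : Set (ℤ → A)) : Prop :=
  ∀ x ∈ Sig, ∀ y ∈ Sig, ∀ ε : ℝ, 0 < ε → ∃ k : ℕ, ∀ n, k < n → EpsChain Sig ε n x y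

/-- Distance from a point to a set, with respect to `rho`. -/
noncomputable def distTo (x : ℤ → A) (Y : Set (ℤ → A)) : ℝ := sInf (rho x '' Y)

/-- `Y` is an attractor of the dynamical system `(Sig, σ)`. -/
def IsAttractor (Sig Y : Set (ℤ → A)) : Prop :=
  Y.Nonempty ∧ Y ⊆ Sig ∧ RhoClosed Y ∧ shift '' Y = Y ∧
  (∀ ε : ℝ, 0 < ε → ∃ δ : ℝ, 0 < δ ∧ ∀ x ∈ Sig, distTo x Y < δ →
    ∀ n : ℕ, 0 < n → distTo (shift^[n] x) Y < ε) ∧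
  (∃ δ : ℝ, 0 < δ ∧ ∀ x ∈ Sig, distTo x Y < δ →
    Filter.Tendsto (fun n : ℕ => distTo (shift^[n] x) Y) Filter.atTop (nhds 0))

end Subshift

namespace LGraph

variable {A : Type} {G : LGraph A}

lemma walk_append {a b c : G.V} {es fs : List G.E}
    (h1 : G.Walk a b es) (h2 : G.Walk b c fs) : G.Walk a c (es ++ fs) := by
  induction h1 with
  | nil v => exact h2
  | cons e h ih => exact Walk.cons e (ih h2)

lemma walk_take {a b : G.V} {es : List G.E} (h : G.Walk a b es) (n : ℕ) :
    ∃ y, G.Walk a y (es.take n) := by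
  induction h generalizing n with
  | nil v => exact ⟨v, by simpa using Walk.nil v⟩
  | cons e h ih =>
    cases n with
    | zero => exact ⟨_, Walk.nil _⟩
    | succ n =>
      obtain ⟨y, hy⟩ := ih n
      exact ⟨y, Walk.cons e hy⟩

lemma walk_drop {a b : G.V} {es : List G.E} (h : G.Walk a b es) (n : ℕ) :
    ∃ x, G.Walk x b (es.drop n) := by
  induction h generalizing n with
  | nil v => exact ⟨v, by simpa using Walk.nil v⟩
  | cons e h ih =>
    cases n with
    | zero => exact ⟨_, Walk.cons e h⟩
    | succ n => exact ih n

lemma walk_end {a b : G.V} {es : List G.E} (h : G.Walk a b es) :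
    b = a ∨ ∃ e ∈ es, G.t e = b := by
  induction h with
  | nil v => exact Or.inl rfl
  | cons e h ih =>
    rcases ih with h' | ⟨e', he', ht⟩
    · exact Or.inr ⟨e, List.mem_cons_self, h'.symm⟩
    · exact Or.inr ⟨e', List.mem_cons_of_mem _ he', ht⟩

lemma reach_walk {a b : G.V} (h : G.Reach a b) : ∃ es, G.Walk a b es := by
  induction h using Relation.ReflTransGen.head_induction_on with
  | refl => exact ⟨[], Walk.nil b⟩
  | head hstep h ih =>
    obtain ⟨e, hse, hte⟩ := hstep
    obtain ⟨es, hw⟩ := ih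
    subst hse hte
    exact ⟨e :: es, Walk.cons e hw⟩

lemma lang_infix {w z : List A} (hw : w ∈ G.Lang) (hz : z <:+: w) : z ∈ G.Lang := by
  obtain ⟨a, b, es, hwalk, hmap⟩ := hw
  obtain ⟨s, t, hst⟩ := hz
  obtain ⟨x, hx⟩ := walk_drop hwalk s.length
  obtain ⟨y, hy⟩ := walk_take hx z.length
  refine ⟨x, y, _, hy, ?_⟩
  rw [List.map_take, List.map_drop, hmap, ← hst, List.append_assoc, List.drop_left,
    List.take_left]

lemma followR_take {v : G.V} {w : List A} (hw : w ∈ G.FollowR v) (n : ℕ) :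
    w.take n ∈ G.FollowR v := by
  obtain ⟨p, es, hwalk, hmap, hcomp⟩ := hw
  obtain ⟨y, hy⟩ := walk_take hwalk n
  exact ⟨y, es.take n, hy, by rw [List.map_take, hmap],
    fun e he => hcomp e (List.take_subset n es he)⟩

lemma exists_of_length {u u' : G.V} (h : G.Linked u u') (m : ℕ) :
    ∃ y, y ∈ G.FollowR u ∩ G.FollowR u' ∧ y.length = m := by
  have hlong : ∃ y ∈ G.FollowR u ∩ G.FollowR u', m ≤ y.length := by
    by_contra hc
    push_neg at hc
    apply h
    have hsub : G.FollowR u ∩ G.FollowR u' ⊆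
        (fun es : List G.E => es.map G.lab) '' {es | es.length < m} := by
      rintro y hy
      have h1 := hc y hy
      obtain ⟨⟨p, es, hwalk, hmap, _⟩, _⟩ := hy
      refine ⟨es, ?_, hmap⟩
      have h2 : es.length = y.length := by rw [← hmap, List.length_map]
      simp only [Set.mem_setOf_eq]
      omega
    exact Set.Finite.subset (Set.Finite.image _ (List.finite_length_lt G.E m)) hsub
  obtain ⟨y, hy, hm⟩ := hlong
  refine ⟨y.take m, ⟨followR_take hy.1 m, followR_take hy.2 m⟩, ?_⟩
  rw [List.length_take]
  omega

lemma infix_split {α : Type _} {f z : List α} (hf : f <:+: z) (n m : ℕ)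
    (hlen : f.length ≤ m) : f <:+: z.take (n + m) ∨ f <:+: z.drop n := by
  obtain ⟨s, t, hst⟩ := hf
  by_cases hs : s.length ≤ n
  · left
    have h1 : (s ++ f).length ≤ n + m := by
      simp only [List.length_append]; omega
    refine ⟨s, t.take (n + m - (s ++ f).length), ?_⟩
    rw [← hst, List.take_append, List.take_of_length_le h1,
      List.append_assoc]
  · right
    refine ⟨s.drop n, t, ?_⟩
    conv_rhs => rw [← hst, List.append_assoc, List.drop_append,
      Nat.sub_eq_zero_of_le (le_of_lt (not_le.mp hs)), List.drop_zero]
    rw [List.append_assoc]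

lemma chain_refl {w : List A} (hw : w ∈ G.Lang) : ChainWord G.Lang w w 0 w :=
  ⟨rfl, by simp, by simp, by simp, fun z hz _ => lang_infix hw hz⟩

lemma chain_trans {L : Set (List A)} {w w1 w2 : List A} {n1 n2 : ℕ} {z1 z2 : List A}
    (h1 : ChainWord L w w1 n1 z1) (h2 : ChainWord L w1 w2 n2 z2) :
    ChainWord L w w2 (n1 + n2) (z1.take n1 ++ z2) := by
  obtain ⟨e1, l1, t1, d1, f1⟩ := h1
  obtain ⟨e2, l2, t2, d2, f2⟩ := h2
  have hn1 : n1 ≤ z1.length := by omega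
  have hlt : (z1.take n1).length = n1 := by
    rw [List.length_take]; omega
  rw [← e1] at t2
  have htk : (z1.take n1 ++ z2).take (n1 + w.length) = z1 := by
    rw [List.take_append, hlt, Nat.add_sub_cancel_left,
      List.take_take, Nat.min_eq_right (by omega), t2, ← d1,
      List.take_append_drop]
  have hdr : (z1.take n1 ++ z2).drop n1 = z2 := by
    rw [List.drop_append, hlt, List.drop_of_length_le (le_of_eq hlt),
      Nat.sub_self, List.drop_zero, List.nil_append]
  refine ⟨e1.trans e2, ?_, ?_, ?_, ?_⟩
  · rw [List.length_append, hlt]; omega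
  · have : (z1.take n1 ++ z2).take w.length
        = ((z1.take n1 ++ z2).take (n1 + w.length)).take w.length := by
      rw [List.take_take, Nat.min_eq_left (by omega)]
    rw [this, htk, t1]
  · rw [← List.drop_drop, hdr]
    exact d2
  · intro f hf hflen
    rcases infix_split hf n1 w.length hflen with hc | hc
    · exact f1 f (htk ▸ hc) hflen
    · exact f2 f (hdr ▸ hc) (by omega)

lemma step_lemma (G : LGraph A) {u u' : G.V} (h : G.Linked u u') {w : List A}
    (hw : ∃ (v0 : G.V) (es : List G.E), G.Walk v0 u es ∧ es.map G.lab = w) :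
    ∃ w' : List A, w'.length = w.length ∧
      (∃ (v0' : G.V) (es' : List G.E), G.Walk v0' u' es' ∧ es'.map G.lab = w') ∧
      ∃ (n : ℕ) (z : List A), ChainWord G.Lang w w' n z := by
  obtain ⟨v0, es, hwalk, hmap⟩ := hw
  obtain ⟨y, ⟨hyu, hyu'⟩, hylen⟩ := exists_of_length h w.length
  obtain ⟨p, fs, hfs, hfsmap, _⟩ := hyu
  obtain ⟨q, gs, hgs, hgsmap, hgscomp⟩ := hyu'
  have hqu' : G.Reach q u' := by
    rcases walk_end hgs with h' | ⟨e, he, hte⟩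
    · exact h' ▸ Relation.ReflTransGen.refl
    · exact hte ▸ (hgscomp e he).2.2
  obtain ⟨rs, hrs⟩ := reach_walk hqu'
  set r := rs.map G.lab with hr
  have hrlen : rs.length = r.length := (List.length_map G.lab : (rs.map G.lab).length = rs.length).symm
  have hz1 : w ++ y ∈ G.Lang :=
    ⟨v0, p, es ++ fs, walk_append hwalk hfs, by rw [List.map_append, hmap, hfsmap]⟩
  have hz2 : y ++ r ∈ G.Lang :=
    ⟨u', u', gs ++ rs, walk_append hgs hrs, by rw [List.map_append, hgsmap]⟩
  have hwy : (w ++ y).length = w.length + w.length := by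
    rw [List.length_append, hylen]
  have htk : (w ++ y ++ r).take (w.length + w.length) = w ++ y := by
    rw [List.take_append, hwy, Nat.sub_self, List.take_zero,
      List.append_nil, List.take_of_length_le (le_of_eq hwy)]
  have hdr : (w ++ y ++ r).drop w.length = y ++ r := by
    rw [List.append_assoc, List.drop_left]
  refine ⟨(y ++ r).drop r.length, ?_, ?_, w.length + r.length, w ++ y ++ r,
    ?_, ?_, ?_, ?_, ?_⟩
  · simp [hylen]
  · obtain ⟨x, hx⟩ := walk_drop (walk_append hgs hrs) rs.length
    refine ⟨x, (gs ++ rs).drop rs.length, hx, ?_⟩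
    rw [List.map_drop, List.map_append, hgsmap, ← hr, hrlen]
  · simp [hylen]
  · simp [hylen]; omega
  · have h5 : (w ++ y ++ r).take w.length
        = ((w ++ y ++ r).take (w.length + w.length)).take w.length := by
      rw [List.take_take, Nat.min_eq_left (by omega)]
    rw [h5, htk, List.take_left]
  · rw [← List.drop_drop, hdr]
  · intro f hf hflen
    rcases infix_split hf w.length w.length hflen with hc | hc
    · exact lang_infix hz1 (htk ▸ hc)
    · exact lang_infix hz2 (hdr ▸ hc)

end LGraph

theorem stmt3 {A : Type} (G : LGraph A) (u u' : G.V) (h : G.Approx u u')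
    (w : List A)
    (hw : ∃ (v0 : G.V) (es : List G.E), G.Walk v0 u es ∧ es.map G.lab = w) :
    ∃ w' : List A, w'.length = w.length ∧
      (∃ (v0' : G.V) (es' : List G.E), G.Walk v0' u' es' ∧ es'.map G.lab = w') ∧
      ∃ (n : ℕ) (z : List A), ChainWord G.Lang w w' n z := by
  induction h with
  | refl =>
    refine ⟨w, rfl, hw, 0, w, LGraph.chain_refl ?_⟩
    obtain ⟨v0, es, h1, h2⟩ := hw
    exact ⟨v0, u, es, h1, h2⟩
  | tail hab hbc ih =>
    obtain ⟨w1, hlen1, hpres1, n1, z1, hchain1⟩ := ih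
    obtain ⟨w2, hlen2, hpres2, n2, z2, hchain2⟩ := G.step_lemma hbc hpres1
    exact ⟨w2, hlen2.trans hlen1, hpres2, n1 + n2, z1.take n1 ++ z2,
      LGraph.chain_trans hchain1 hchain2⟩
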